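/- Let n ≥ 3, let A : ZMod n → EuclideanSpace ℝ (Fin 3) be a (not necessarily planar) closed n-gon with A i ≠ A (i+1) for all i, and let P be a point with P ≠ A i for all i. Then the sum of the apex angles of the pyramid with tip P is dominated by the sum of the external angles of the polygon: ∑ i, ∠ (A i) P (A (i+1)) ≤ ∑ i, (π − ∠ (A (i−1)) (A i) (A (i+1))). -/

import Mathlib

open Real EuclideanGeometry

section AngleTriangle

open InnerProductGeometry RealInnerProductSpace
variable {V : Type*} [NormedAddCommGroup V] [InnerProductSpace ℝ V]



lemma angle_triangle_unit {u v w : V} (hu : ‖u‖ = 1) (hv : ‖v‖ = 1) (hw : ‖w‖ = 1) :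
    InnerProductGeometry.angle u w ≤ InnerProductGeometry.angle u v + InnerProductGeometry.angle v w := by
  have hcos1 : Real.cos (InnerProductGeometry.angle u v) = (inner ℝ u v : ℝ) := by
    rw [cos_angle, hu, hv]; simp
  have hcos2 : Real.cos (InnerProductGeometry.angle v w) = (inner ℝ v w : ℝ) := by
    rw [cos_angle, hv, hw]; simp
  have hcos3 : Real.cos (InnerProductGeometry.angle u w) = (inner ℝ u w : ℝ) := by
    rw [cos_angle, hu, hw]; simp
  have hsin1 : Real.sin (InnerProductGeometry.angle u v)
      = Real.sqrt (1 - (inner ℝ u v : ℝ) ^ 2) := by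
    rw [InnerProductGeometry.angle, Real.sin_arccos, hu, hv]; simp
  have hsin2 : Real.sin (InnerProductGeometry.angle v w)
      = Real.sqrt (1 - (inner ℝ v w : ℝ) ^ 2) := by
    rw [InnerProductGeometry.angle, Real.sin_arccos, hv, hw]; simp
  have hv2 : (inner ℝ v v : ℝ) = 1 := by
    rw [real_inner_self_eq_norm_sq, hv]; norm_num
  have hu2 : (inner ℝ u u : ℝ) = 1 := by
    rw [real_inner_self_eq_norm_sq, hu]; norm_num
  have hw2 : (inner ℝ w w : ℝ) = 1 := by
    rw [real_inner_self_eq_norm_sq, hw]; norm_num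
  have hpq : (inner ℝ (u - (inner ℝ u v : ℝ) • v) (w - (inner ℝ v w : ℝ) • v) : ℝ)
      = (inner ℝ u w : ℝ) - (inner ℝ u v : ℝ) * (inner ℝ v w : ℝ) := by
    simp only [inner_sub_left, inner_sub_right, real_inner_smul_left,
      real_inner_smul_right, hv2]
    rw [real_inner_comm w v, real_inner_comm v u]
    ring
  have hnp : ‖u - (inner ℝ u v : ℝ) • v‖ = Real.sqrt (1 - (inner ℝ u v : ℝ) ^ 2) := by
    rw [← Real.sqrt_sq (norm_nonneg _)]
    congr 1
    rw [← real_inner_self_eq_norm_sq]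
    simp only [inner_sub_left, inner_sub_right, real_inner_smul_left,
      real_inner_smul_right, hv2, hu2]
    rw [real_inner_comm v u]
    ring
  have hnq : ‖w - (inner ℝ v w : ℝ) • v‖ = Real.sqrt (1 - (inner ℝ v w : ℝ) ^ 2) := by
    rw [← Real.sqrt_sq (norm_nonneg _)]
    congr 1
    rw [← real_inner_self_eq_norm_sq]
    simp only [inner_sub_left, inner_sub_right, real_inner_smul_left,
      real_inner_smul_right, hv2, hw2]
    rw [real_inner_comm w v]
    ring
  have key : (inner ℝ u v : ℝ) * (inner ℝ v w : ℝ)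
      - Real.sqrt (1 - (inner ℝ u v : ℝ) ^ 2) * Real.sqrt (1 - (inner ℝ v w : ℝ) ^ 2)
      ≤ (inner ℝ u w : ℝ) := by
    have h1 : -(‖u - (inner ℝ u v : ℝ) • v‖ * ‖w - (inner ℝ v w : ℝ) • v‖)
        ≤ (inner ℝ (u - (inner ℝ u v : ℝ) • v) (w - (inner ℝ v w : ℝ) • v) : ℝ) := by
      have h2 := abs_real_inner_le_norm (u - (inner ℝ u v : ℝ) • v) (w - (inner ℝ v w : ℝ) • v)
      linarith [neg_abs_le ((inner ℝ (u - (inner ℝ u v : ℝ) • v) (w - (inner ℝ v w : ℝ) • v) : ℝ))]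
    rw [hpq, hnp, hnq] at h1
    linarith
  have hcosadd : Real.cos (InnerProductGeometry.angle u v + InnerProductGeometry.angle v w)
      ≤ Real.cos (InnerProductGeometry.angle u w) := by
    rw [Real.cos_add, hcos1, hcos2, hsin1, hsin2, hcos3]
    exact key
  by_cases hpi : InnerProductGeometry.angle u v + InnerProductGeometry.angle v w ≤ π
  · have h1 : InnerProductGeometry.angle u w ∈ Set.Icc 0 π :=
      ⟨InnerProductGeometry.angle_nonneg u w, InnerProductGeometry.angle_le_pi u w⟩
    have h2 : InnerProductGeometry.angle u v + InnerProductGeometry.angle v w ∈ Set.Icc 0 π :=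
      ⟨add_nonneg (InnerProductGeometry.angle_nonneg u v)
        (InnerProductGeometry.angle_nonneg v w), hpi⟩
    exact (Real.strictAntiOn_cos.le_iff_ge h2 h1).mp hcosadd
  · linarith [InnerProductGeometry.angle_le_pi u w]

lemma angle_triangle_nonzero {x y z : V} (hx : x ≠ 0) (hy : y ≠ 0) (hz : z ≠ 0) :
    InnerProductGeometry.angle x z ≤ InnerProductGeometry.angle x y + InnerProductGeometry.angle y z := by
  have px : (0:ℝ) < ‖x‖⁻¹ := inv_pos.mpr (norm_pos_iff.mpr hx)
  have py : (0:ℝ) < ‖y‖⁻¹ := inv_pos.mpr (norm_pos_iff.mpr hy)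
  have pz : (0:ℝ) < ‖z‖⁻¹ := inv_pos.mpr (norm_pos_iff.mpr hz)
  have h1 : InnerProductGeometry.angle x z = InnerProductGeometry.angle (‖x‖⁻¹ • x) (‖z‖⁻¹ • z) := by
    rw [angle_smul_left_of_pos _ _ px, angle_smul_right_of_pos _ _ pz]
  have h2 : InnerProductGeometry.angle x y = InnerProductGeometry.angle (‖x‖⁻¹ • x) (‖y‖⁻¹ • y) := by
    rw [angle_smul_left_of_pos _ _ px, angle_smul_right_of_pos _ _ py]
  have h3 : InnerProductGeometry.angle y z = InnerProductGeometry.angle (‖y‖⁻¹ • y) (‖z‖⁻¹ • z) := by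
    rw [angle_smul_left_of_pos _ _ py, angle_smul_right_of_pos _ _ pz]
  rw [h1, h2, h3]
  exact angle_triangle_unit (norm_smul_inv_norm hx) (norm_smul_inv_norm hy) (norm_smul_inv_norm hz)

end AngleTriangle

lemma euclidean_angle_triangle {p q r s : EuclideanSpace ℝ (Fin 3)}
    (hp : p ≠ q) (hr : r ≠ q) (hs : s ≠ q) :
    ∠ p q r ≤ ∠ p q s + ∠ s q r :=
  angle_triangle_nonzero (vsub_ne_zero.mpr hp) (vsub_ne_zero.mpr hs) (vsub_ne_zero.mpr hr)

theorem sum_apex_angles_le_sum_external_angles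
    (n : ℕ) (hn : 3 ≤ n) [NeZero n]
    (A : ZMod n → EuclideanSpace ℝ (Fin 3)) (P : EuclideanSpace ℝ (Fin 3))
    (hA : ∀ i, A i ≠ A (i + 1)) (hP : ∀ i, P ≠ A i) :
    ∑ i : ZMod n, ∠ (A i) P (A (i + 1)) ≤
      ∑ i : ZMod n, (π - ∠ (A (i - 1)) (A i) (A (i + 1))) := by
  have key : ∀ i : ZMod n,
      ∠ (A i) P (A (i + 1)) = π - ∠ P (A i) (A (i + 1)) - ∠ P (A (i + 1)) (A i) := by
    intro i
    have := EuclideanGeometry.angle_add_angle_add_angle_eq_pi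
      (p₁ := P) (p₂ := A i) (A (i + 1)) (Ne.symm (hP i))
    rw [EuclideanGeometry.angle_comm (A i) (A (i+1)) P,
      EuclideanGeometry.angle_comm (A (i+1)) P (A i)] at this
    linarith
  have hshift : ∑ i : ZMod n, ∠ P (A (i + 1)) (A i) = ∑ i : ZMod n, ∠ P (A i) (A (i - 1)) := by
    apply Fintype.sum_equiv (Equiv.addRight (1 : ZMod n))
    intro i
    simp [Equiv.addRight]
  calc ∑ i : ZMod n, ∠ (A i) P (A (i + 1))
      = ∑ i : ZMod n, (π - ∠ P (A i) (A (i + 1))) - ∑ i : ZMod n, ∠ P (A (i + 1)) (A i) := by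
        simp only [key]
        rw [← Finset.sum_sub_distrib]
    _ = ∑ i : ZMod n, (π - ∠ P (A i) (A (i + 1)) - ∠ P (A i) (A (i - 1))) := by
        rw [hshift, ← Finset.sum_sub_distrib]
    _ ≤ ∑ i : ZMod n, (π - ∠ (A (i - 1)) (A i) (A (i + 1))) := by
        apply Finset.sum_le_sum
        intro i _
        have htri : ∠ (A (i - 1)) (A i) (A (i + 1)) ≤
            ∠ (A (i - 1)) (A i) P + ∠ P (A i) (A (i + 1)) := by
          apply euclidean_angle_triangle
          · have := hA (i - 1)
            rwa [sub_add_cancel] at this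
          · exact Ne.symm (hA i)
          · exact hP i
        rw [EuclideanGeometry.angle_comm (A (i - 1)) (A i) P] at htri
        linarith
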